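/- (Theorem 4.2, upper bound: breakdown by coplanar contamination without outliers or inliers.) Suppose u satisfies Condition 2.1 with constant K and ε_m = m/(n+m) > 1 − n(p−1)/((n−1)K). Let Y = (x_1, x_1, …, x_1) consist of m copies of the first data point x_1 of X. Then no M-estimate of scatter for the contaminated sample Z = X ∪ Y about t exists. -/

import Mathlib

open Matrix Finset Filter

noncomputable section

/-- Condition 2.1 with constant `K`: `u` is nonnegative, non-increasing and continuous on
`(0,∞)`; `ψ(s) = s·u(s)` is non-decreasing, strictly increasing wherever `ψ(s) < K`,
and `K = sup_{s>0} ψ(s)` (in particular `ψ` is bounded); and `K > p`. -/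
structure Cond21 (p : ℕ) (u : ℝ → ℝ) (K : ℝ) : Prop where
  nonneg : ∀ ⦃s : ℝ⦄, 0 < s → 0 ≤ u s
  antitone : ∀ ⦃s₁ s₂ : ℝ⦄, 0 < s₁ → s₁ ≤ s₂ → u s₂ ≤ u s₁
  cont : ContinuousOn u (Set.Ioi 0)
  psi_mono : ∀ ⦃s₁ s₂ : ℝ⦄, 0 < s₁ → s₁ ≤ s₂ → s₁ * u s₁ ≤ s₂ * u s₂
  psi_strictMono : ∀ ⦃s₁ s₂ : ℝ⦄, 0 < s₁ → s₁ < s₂ → s₁ * u s₁ < K → s₁ * u s₁ < s₂ * u s₂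
  psi_lub : IsLUB {y : ℝ | ∃ s : ℝ, 0 < s ∧ y = s * u s} K
  K_gt_p : (p : ℝ) < K

/-- `V` is an M-estimate of scatter for the list `z` about the center `t`:
`V` is positive definite (hence symmetric) and satisfies
`V = (1/N) Σᵢ u(sᵢ) (zᵢ - t)(zᵢ - t)ᵀ` with `sᵢ = (zᵢ - t)ᵀ V⁻¹ (zᵢ - t)`,
the `i`-th summand being the zero matrix when `zᵢ = t`. -/
def IsScatterMEstimate {p N : ℕ} (u : ℝ → ℝ) (t : Fin p → ℝ)
    (z : Fin N → Fin p → ℝ) (V : Matrix (Fin p) (Fin p) ℝ) : Prop :=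
  V.PosDef ∧
    V = (N : ℝ)⁻¹ • ∑ i : Fin N,
      if z i = t then (0 : Matrix (Fin p) (Fin p) ℝ)
      else u ((z i - t) ⬝ᵥ (V⁻¹ *ᵥ (z i - t))) • Matrix.vecMulVec (z i - t) (z i - t)

/-- A list of points of `ℝᵖ` is in general position about `t` if any `p` of the
differences (point − t), taken with distinct indices, are linearly independent. -/
def GenPosAbout {p n : ℕ} (t : Fin p → ℝ) (x : Fin n → Fin p → ℝ) : Prop :=
  ∀ f : Fin p → Fin n, Function.Injective f →
    LinearIndependent ℝ (fun j : Fin p => x (f j) - t)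

/-- Squared Euclidean distance from `t` to `z`. -/
def sqDist {p : ℕ} (t z : Fin p → ℝ) : ℝ := (z - t) ⬝ᵥ (z - t)

/-- The unit direction `θ(z) = (z - t)/‖z - t‖` (Euclidean norm). -/
def dirFrom {p : ℕ} (t z : Fin p → ℝ) : Fin p → ℝ :=
  (Real.sqrt (sqDist t z))⁻¹ • (z - t)

/-- `Y ∈ C_{1,ρ,m}(X)`: for every choice of `p` points of `Z = X ∪ Y` with distinct
indices, all different from `t`, the smallest eigenvalue of `Σⱼ θ(z_{i(j)})θ(z_{i(j)})ᵀ`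
exceeds `ρ`; this is expressed via the Rayleigh quotient characterization of the
smallest eigenvalue of a symmetric matrix. -/
def InC1 {p n m : ℕ} (ρ : ℝ) (t : Fin p → ℝ) (X : Fin n → Fin p → ℝ)
    (Y : Fin m → Fin p → ℝ) : Prop :=
  ∀ f : Fin p → Fin (n + m), Function.Injective f →
    (∀ j, Fin.append X Y (f j) ≠ t) →
    ∀ v : Fin p → ℝ, v ⬝ᵥ v = 1 →
      ρ < v ⬝ᵥ ((∑ j : Fin p,
        Matrix.vecMulVec (dirFrom t (Fin.append X Y (f j)))
          (dirFrom t (Fin.append X Y (f j)))) *ᵥ v)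

/-- `Y ∈ C_{2,r,m}(X)`: every contaminating point satisfies `‖yᵢ - t‖² > r`. -/
def InC2 {p m : ℕ} (r : ℝ) (t : Fin p → ℝ) (Y : Fin m → Fin p → ℝ) : Prop :=
  ∀ i : Fin m, r < sqDist t (Y i)

/-- `Y ∈ C_{3,B,m}(X)`: every contaminating point satisfies `‖yᵢ - t‖² < B`. -/
def InC3 {p m : ℕ} (B : ℝ) (t : Fin p → ℝ) (Y : Fin m → Fin p → ℝ) : Prop :=
  ∀ i : Fin m, sqDist t (Y i) < B

lemma my_sum_mulVec {p : ℕ} {ι : Type*} (s : Finset ι) (T : ι → Matrix (Fin p) (Fin p) ℝ)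
    (w : Fin p → ℝ) : (∑ i ∈ s, T i) *ᵥ w = ∑ i ∈ s, (T i) *ᵥ w := by
  ext j
  simp only [Matrix.mulVec, dotProduct, Matrix.sum_apply, Finset.sum_apply, Finset.sum_mul]
  rw [Finset.sum_comm]

lemma my_trace_mul_vecMulVec {p : ℕ} (M : Matrix (Fin p) (Fin p) ℝ) (a b : Fin p → ℝ) :
    Matrix.trace (M * Matrix.vecMulVec a b) = b ⬝ᵥ (M *ᵥ a) := by
  simp only [Matrix.trace, Matrix.mul_apply, Matrix.vecMulVec_apply, Matrix.diag,
    dotProduct, Matrix.mulVec, Finset.mul_sum, Finset.sum_mul]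
  apply Finset.sum_congr rfl; intro i _; apply Finset.sum_congr rfl; intro j _; ring

lemma my_dotProduct_sum {p : ℕ} {ι : Type*} (s : Finset ι) (w : Fin p → ℝ)
    (v : ι → Fin p → ℝ) : w ⬝ᵥ (∑ i ∈ s, v i) = ∑ i ∈ s, w ⬝ᵥ v i := by
  simp only [dotProduct, Finset.sum_apply, Finset.mul_sum]
  rw [Finset.sum_comm]

lemma my_vecMulVec_mulVec {p : ℕ} (a b w : Fin p → ℝ) :
    Matrix.vecMulVec a b *ᵥ w = (b ⬝ᵥ w) • a := by
  ext j
  simp only [Matrix.mulVec, Matrix.vecMulVec_apply, dotProduct, Pi.smul_apply,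
    smul_eq_mul, mul_assoc]
  rw [← Finset.mul_sum]
  ring

set_option maxHeartbeats 1000000 in
/-- Theorem 4.2 (upper bound: breakdown by coplanar contamination without outliers or
inliers): if `ε_m = m/(n+m) > 1 - n(p-1)/((n-1)K)` and `Y` consists of `m` copies of
the first data point `x₁` of `X`, then no M-estimate of scatter for `Z = X ∪ Y` about
`t` exists. -/
theorem statement17 (p n m : ℕ) (hp : 2 ≤ p) (hm : 1 ≤ m) (hn : p * (p - 1) < n)
    (t : Fin p → ℝ) (u : ℝ → ℝ) (K : ℝ) (hu : Cond21 p u K)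
    (X : Fin n → Fin p → ℝ) (hX : GenPosAbout t X)
    (heps : 1 - (n : ℝ) * ((p : ℝ) - 1) / (((n : ℝ) - 1) * K)
      < (m : ℝ) / ((n : ℝ) + m)) :
    ¬ ∃ V : Matrix (Fin p) (Fin p) ℝ,
      IsScatterMEstimate u t
        (Fin.append X (fun _ : Fin m => X ⟨0, Nat.lt_of_le_of_lt (Nat.zero_le _) hn⟩))
        V := by
  rintro ⟨V, hV⟩
  unfold IsScatterMEstimate at hV
  obtain ⟨hpd, heq⟩ := hV
  -- basic numerics
  have hpn : p < n := lt_of_le_of_lt (Nat.le_mul_of_pos_right p (by omega)) hn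
  have hn3 : 3 ≤ n := by nlinarith [hp, hn, Nat.le_mul_of_pos_right p (show 0 < p - 1 by omega)]
  set i0 : Fin n := ⟨0, Nat.lt_of_le_of_lt (Nat.zero_le _) hn⟩ with hi0
  set x1 : Fin p → ℝ := X i0 with hx1
  set z : Fin (n + m) → Fin p → ℝ := Fin.append X (fun _ : Fin m => x1) with hzdef
  have hdet : IsUnit V.det := isUnit_iff_ne_zero.mpr hpd.det_pos.ne'
  have hinv : V⁻¹ * V = 1 := Matrix.nonsing_inv_mul V hdet
  have hinv' : V * V⁻¹ = 1 := Matrix.mul_nonsing_inv V hdet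
  have hinvpd : V⁻¹.PosDef := hpd.inv
  -- x1 ≠ t
  have hx1t : x1 ≠ t := by
    intro h0
    have hinj : Function.Injective (fun j : Fin p => (⟨j.val, lt_trans j.isLt hpn⟩ : Fin n)) := by
      intro a b hab
      exact Fin.ext (by simpa using congrArg Fin.val hab)
    have hli := hX _ hinj
    have := hli.ne_zero ⟨0, by omega⟩
    apply this
    simp only
    rw [show (⟨(0:ℕ), lt_trans (by omega) hpn⟩ : Fin n) = i0 from rfl, ← hx1, h0, sub_self]
  -- positivity of Mahalanobis distances
  have hS_pos : ∀ w : Fin p → ℝ, w ≠ t → 0 < (w - t) ⬝ᵥ (V⁻¹ *ᵥ (w - t)) := by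
    intro w hw
    have h := hinvpd.dotProduct_mulVec_pos (sub_ne_zero.mpr hw)
    simpa using h
  have hpsiK : ∀ s : ℝ, 0 < s → s * u s ≤ K := fun s hs => hu.psi_lub.1 ⟨s, hs, rfl⟩
  have hp2 : (2:ℝ) ≤ (p:ℝ) := by exact_mod_cast hp
  have hK0 : (0:ℝ) < K := lt_trans (by linarith) hu.K_gt_p
  set s1 : ℝ := (x1 - t) ⬝ᵥ (V⁻¹ *ᵥ (x1 - t)) with hs1def
  have hs1 : 0 < s1 := hS_pos x1 hx1t
  set c : ℝ := ((n + m : ℕ) : ℝ)⁻¹ with hcdef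
  have hc : 0 < c := by positivity
  -- trace identity
  have htrace : (p : ℝ) = c * ∑ i : Fin (n + m),
      (if z i = t then 0 else
        ((z i - t) ⬝ᵥ (V⁻¹ *ᵥ (z i - t))) * u ((z i - t) ⬝ᵥ (V⁻¹ *ᵥ (z i - t)))) := by
    have h1 : Matrix.trace (V⁻¹ * V) = (p : ℝ) := by
      rw [hinv, Matrix.trace_one]
      simp
    rw [← h1]
    nth_rewrite 2 [heq]
    rw [Matrix.mul_smul, Matrix.trace_smul, Matrix.mul_sum, Matrix.trace_sum, smul_eq_mul]
    congr 1
    apply Finset.sum_congr rfl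
    intro i _
    split_ifs with h
    · simp
    · rw [Matrix.mul_smul, Matrix.trace_smul, my_trace_mul_vecMulVec, smul_eq_mul, mul_comm]
  -- key quadratic-form identity with w = V⁻¹ (x1 - t)
  set w : Fin p → ℝ := V⁻¹ *ᵥ (x1 - t) with hwdef
  have hkey : s1 = c * ∑ i : Fin (n + m),
      (if z i = t then 0 else
        u ((z i - t) ⬝ᵥ (V⁻¹ *ᵥ (z i - t))) * ((z i - t) ⬝ᵥ w) ^ 2) := by
    have h1 : w ⬝ᵥ (V *ᵥ w) = s1 := by
      nth_rewrite 2 [hwdef]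
      rw [Matrix.mulVec_mulVec, hinv', Matrix.one_mulVec, dotProduct_comm, hs1def, hwdef]
    rw [← h1]
    nth_rewrite 1 [heq]
    rw [Matrix.smul_mulVec, dotProduct_smul, my_sum_mulVec, my_dotProduct_sum, smul_eq_mul]
    congr 1
    apply Finset.sum_congr rfl
    intro i _
    split_ifs with h
    · simp
    · rw [Matrix.smul_mulVec, my_vecMulVec_mulVec, dotProduct_smul, dotProduct_smul,
        smul_eq_mul, smul_eq_mul, dotProduct_comm w (z i - t)]
      ring
  -- shared facts
  have hcast : ((n + m : ℕ) : ℝ) = (n : ℝ) + m := by push_cast; ring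
  have hNR : (0:ℝ) < (n:ℝ) + m := by positivity
  have hx1w : (x1 - t) ⬝ᵥ w = s1 := hs1def.symm
  have hznat : ∀ j : Fin m, z (Fin.natAdd n j) = x1 := by
    intro j; rw [hzdef]; exact Fin.append_right _ _ j
  have hzcast : ∀ j : Fin n, z (Fin.castAdd m j) = X j := by
    intro j; rw [hzdef]; exact Fin.append_left _ _ j
  have hXt : ∀ j : Fin n, X j ≠ t → 0 < (X j - t) ⬝ᵥ (V⁻¹ *ᵥ (X j - t)) :=
    fun j hj => hS_pos (X j) hj
  -- bound (m+1) ψ(s1) ≤ n + m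
  have hbound1 : ((m : ℝ) + 1) * (s1 * u s1) ≤ (n : ℝ) + m := by
    have hterm_nonneg : ∀ i : Fin (n + m), 0 ≤ (if z i = t then 0 else
        u ((z i - t) ⬝ᵥ (V⁻¹ *ᵥ (z i - t))) * ((z i - t) ⬝ᵥ w) ^ 2) := by
      intro i
      split_ifs with h
      · exact le_refl _
      · exact mul_nonneg (hu.nonneg (hS_pos _ h)) (sq_nonneg _)
    have hmain : c * ((1 + (m:ℝ)) * (u s1 * s1 ^ 2)) ≤ s1 := by
      conv_rhs => rw [hkey]
      apply mul_le_mul_of_nonneg_left _ hc.le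
      rw [Fin.sum_univ_add]
      have hB : (∑ j : Fin m, (if z (Fin.natAdd n j) = t then 0 else
          u ((z (Fin.natAdd n j) - t) ⬝ᵥ (V⁻¹ *ᵥ (z (Fin.natAdd n j) - t))) *
            ((z (Fin.natAdd n j) - t) ⬝ᵥ w) ^ 2))
          = (m : ℝ) * (u s1 * s1 ^ 2) := by
        have hfun : ∀ j : Fin m, (if z (Fin.natAdd n j) = t then 0 else
            u ((z (Fin.natAdd n j) - t) ⬝ᵥ (V⁻¹ *ᵥ (z (Fin.natAdd n j) - t))) *
              ((z (Fin.natAdd n j) - t) ⬝ᵥ w) ^ 2) = u s1 * s1 ^ 2 := by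
          intro j
          rw [hznat j, if_neg hx1t, ← hwdef, ← hs1def]
        calc (∑ j : Fin m, (if z (Fin.natAdd n j) = t then 0 else
            u ((z (Fin.natAdd n j) - t) ⬝ᵥ (V⁻¹ *ᵥ (z (Fin.natAdd n j) - t))) *
              ((z (Fin.natAdd n j) - t) ⬝ᵥ w) ^ 2))
            = ∑ _j : Fin m, u s1 * s1 ^ 2 := Finset.sum_congr rfl fun j _ => hfun j
          _ = (m : ℝ) * (u s1 * s1 ^ 2) := by
            rw [Finset.sum_const, card_univ, Fintype.card_fin, nsmul_eq_mul]
      have hA : u s1 * s1 ^ 2 ≤ ∑ j : Fin n, (if z (Fin.castAdd m j) = t then 0 else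
          u ((z (Fin.castAdd m j) - t) ⬝ᵥ (V⁻¹ *ᵥ (z (Fin.castAdd m j) - t))) *
            ((z (Fin.castAdd m j) - t) ⬝ᵥ w) ^ 2) := by
        have h0 := Finset.single_le_sum (f := fun j : Fin n =>
          (if z (Fin.castAdd m j) = t then 0 else
            u ((z (Fin.castAdd m j) - t) ⬝ᵥ (V⁻¹ *ᵥ (z (Fin.castAdd m j) - t))) *
              ((z (Fin.castAdd m j) - t) ⬝ᵥ w) ^ 2))
          (fun j _ => hterm_nonneg (Fin.castAdd m j)) (Finset.mem_univ i0)
        have hzi0 : z (Fin.castAdd m i0) = x1 := hzcast i0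
        simp only [hzi0] at h0
        rw [if_neg hx1t, ← hwdef, ← hs1def] at h0
        exact h0
      linarith [hA, hB.ge, hB.le]
    have h2 : (1 + (m:ℝ)) * (u s1 * s1 ^ 2) ≤ s1 * ((n:ℝ) + m) := by
      have h3 := mul_le_mul_of_nonneg_left hmain hNR.le
      calc (1 + (m:ℝ)) * (u s1 * s1 ^ 2)
          = ((n:ℝ) + m) * (c * ((1 + (m:ℝ)) * (u s1 * s1 ^ 2))) := by
            rw [hcdef, hcast]; field_simp
        _ ≤ ((n:ℝ) + m) * s1 := h3
        _ = s1 * ((n:ℝ) + m) := mul_comm _ _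
    nlinarith [h2, hs1]
  -- bound p (n+m) ≤ (m+1) ψ(s1) + (n-1) K
  have hbound2 : (p : ℝ) * ((n : ℝ) + m) ≤ ((m : ℝ) + 1) * (s1 * u s1) + ((n : ℝ) - 1) * K := by
    have hsum : (p : ℝ) * ((n : ℝ) + m) = ∑ i : Fin (n + m),
        (if z i = t then 0 else
          ((z i - t) ⬝ᵥ (V⁻¹ *ᵥ (z i - t))) * u ((z i - t) ⬝ᵥ (V⁻¹ *ᵥ (z i - t)))) := by
      rw [htrace, hcdef, hcast]; field_simp
    rw [hsum, Fin.sum_univ_add]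
    have hB : (∑ j : Fin m, (if z (Fin.natAdd n j) = t then 0 else
        ((z (Fin.natAdd n j) - t) ⬝ᵥ (V⁻¹ *ᵥ (z (Fin.natAdd n j) - t))) *
          u ((z (Fin.natAdd n j) - t) ⬝ᵥ (V⁻¹ *ᵥ (z (Fin.natAdd n j) - t)))))
        = (m : ℝ) * (s1 * u s1) := by
      have hfun : ∀ j : Fin m, (if z (Fin.natAdd n j) = t then 0 else
          ((z (Fin.natAdd n j) - t) ⬝ᵥ (V⁻¹ *ᵥ (z (Fin.natAdd n j) - t))) *
            u ((z (Fin.natAdd n j) - t) ⬝ᵥ (V⁻¹ *ᵥ (z (Fin.natAdd n j) - t)))) = s1 * u s1 := by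
        intro j
        rw [hznat j, ← hwdef, ← hs1def]
        exact if_neg hx1t
      calc (∑ j : Fin m, (if z (Fin.natAdd n j) = t then 0 else
          ((z (Fin.natAdd n j) - t) ⬝ᵥ (V⁻¹ *ᵥ (z (Fin.natAdd n j) - t))) *
            u ((z (Fin.natAdd n j) - t) ⬝ᵥ (V⁻¹ *ᵥ (z (Fin.natAdd n j) - t)))))
          = ∑ _j : Fin m, s1 * u s1 := Finset.sum_congr rfl fun j _ => hfun j
        _ = (m : ℝ) * (s1 * u s1) := by
          rw [Finset.sum_const, card_univ, Fintype.card_fin, nsmul_eq_mul]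
    have hAsplit : (∑ j : Fin n, (if z (Fin.castAdd m j) = t then 0 else
        ((z (Fin.castAdd m j) - t) ⬝ᵥ (V⁻¹ *ᵥ (z (Fin.castAdd m j) - t))) *
          u ((z (Fin.castAdd m j) - t) ⬝ᵥ (V⁻¹ *ᵥ (z (Fin.castAdd m j) - t)))))
        ≤ s1 * u s1 + ((n : ℝ) - 1) * K := by
      rw [← Finset.add_sum_erase _ _ (Finset.mem_univ i0)]
      have hi0term : (if z (Fin.castAdd m i0) = t then 0 else
          ((z (Fin.castAdd m i0) - t) ⬝ᵥ (V⁻¹ *ᵥ (z (Fin.castAdd m i0) - t))) *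
            u ((z (Fin.castAdd m i0) - t) ⬝ᵥ (V⁻¹ *ᵥ (z (Fin.castAdd m i0) - t))))
          = s1 * u s1 := by
        rw [hzcast i0, ← hwdef, ← hs1def]
        exact if_neg hx1t
      rw [hi0term]
      have herase : (∑ j ∈ Finset.univ.erase i0, (if z (Fin.castAdd m j) = t then 0 else
          ((z (Fin.castAdd m j) - t) ⬝ᵥ (V⁻¹ *ᵥ (z (Fin.castAdd m j) - t))) *
            u ((z (Fin.castAdd m j) - t) ⬝ᵥ (V⁻¹ *ᵥ (z (Fin.castAdd m j) - t)))))
          ≤ ((n : ℝ) - 1) * K := by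
        have hcard : (Finset.univ.erase i0).card = n - 1 := by
          rw [Finset.card_erase_of_mem (Finset.mem_univ i0), Finset.card_univ, Fintype.card_fin]
        have hle := Finset.sum_le_card_nsmul (Finset.univ.erase i0)
          (fun j : Fin n => (if z (Fin.castAdd m j) = t then 0 else
            ((z (Fin.castAdd m j) - t) ⬝ᵥ (V⁻¹ *ᵥ (z (Fin.castAdd m j) - t))) *
              u ((z (Fin.castAdd m j) - t) ⬝ᵥ (V⁻¹ *ᵥ (z (Fin.castAdd m j) - t))))) K
          (fun j _ => by
            simp only [hzcast j]
            split_ifs with h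
            · exact hK0.le
            · exact hpsiK _ (hXt j h))
        rw [hcard, nsmul_eq_mul] at hle
        have : ((n - 1 : ℕ) : ℝ) = (n : ℝ) - 1 := by
          rw [Nat.cast_sub (by omega)]; norm_num
        rw [this] at hle
        exact hle
      linarith
    linarith [hB.le, hAsplit]
  -- final contradiction
  have hA : (3:ℝ) ≤ (n:ℝ) := by exact_mod_cast hn3
  have hB : (1:ℝ) ≤ (m:ℝ) := by exact_mod_cast hm
  have hden : (0:ℝ) < ((n:ℝ) - 1) * K := by nlinarith
  have hNpos : (0:ℝ) < (n:ℝ) + m := by linarith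
  have hcontr : ((n:ℝ) - 1) * K < ((p:ℝ) - 1) * ((n:ℝ) + m) := by
    have h1 : (n:ℝ) / ((n:ℝ) + m) < (n:ℝ) * ((p:ℝ) - 1) / (((n:ℝ) - 1) * K) := by
      have : 1 - (m:ℝ) / ((n:ℝ) + m) = (n:ℝ) / ((n:ℝ) + m) := by
        field_simp
        ring
      linarith [heps]
    rw [div_lt_div_iff₀ hNpos hden] at h1
    have hnpos : (0:ℝ) < (n:ℝ) := by linarith
    have h2 : (n:ℝ) * (((n:ℝ) - 1) * K) < (n:ℝ) * (((p:ℝ) - 1) * ((n:ℝ) + m)) := by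
      ring_nf at h1 ⊢
      linarith
    exact lt_of_mul_lt_mul_left h2 hnpos.le
  linarith [hbound1, hbound2, hcontr]
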